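/- Let X be a separable F-space and T : X → X a continuous linear operator. Then T is 𝒜_PS-hypercyclic if and only if T is hypercyclic and for every non-empty open set U ⊆ X there exists y ∈ X such that N(y,U) is piecewise syndetic. Moreover, in that case the set of 𝒜_PS-hypercyclic vectors of T coincides with the set of hypercyclic vectors of T. -/

import Mathlib

open Filter

/-- The lower density `d̲(A) = liminf_n |A ∩ [0,n]| / (n+1)` of a set `A ⊆ ℕ`. -/
noncomputable def lowerDensity (A : Set ℕ) : ℝ :=
  Filter.liminf (fun n : ℕ => ((A ∩ Set.Icc 0 n).ncard : ℝ) / (n + 1)) Filter.atTop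

/-- The upper density `d̄(A) = limsup_n |A ∩ [0,n]| / (n+1)` of a set `A ⊆ ℕ`. -/
noncomputable def upperDensity (A : Set ℕ) : ℝ :=
  Filter.limsup (fun n : ℕ => ((A ∩ Set.Icc 0 n).ncard : ℝ) / (n + 1)) Filter.atTop

/-- The upper Banach density `Bd̄(A) = lim_n limsup_m |A ∩ [m,m+n]| / (n+1)` of `A ⊆ ℕ`
(the limit in `n` exists, so it equals the `limsup` in `n`, which we use). -/
noncomputable def upperBanachDensity (A : Set ℕ) : ℝ :=
  Filter.limsup (fun n : ℕ =>
    Filter.limsup (fun m : ℕ => ((A ∩ Set.Icc m (m + n)).ncard : ℝ) / (n + 1)) Filter.atTop)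
    Filter.atTop

/-- `shiftUnion A b = ∪_{t=0}^b (A - t)` where `A - t = {n : n + t ∈ A}`. -/
def shiftUnion (A : Set ℕ) (b : ℕ) : Set ℕ := {n : ℕ | ∃ t ≤ b, n + t ∈ A}

/-- `A` is `b`-piecewise syndetic: for every `i ≥ 1` some interval `(z, z+i]` with `z ≥ 1`
is contained in `∪_{t=0}^b (A - t)`. -/
def bPiecewiseSyndetic (b : ℕ) (A : Set ℕ) : Prop :=
  ∀ i ≥ 1, ∃ z ≥ 1, Set.Ioc z (z + i) ⊆ shiftUnion A b

/-- `A` is piecewise syndetic if it is `b`-piecewise syndetic for some `b ≥ 1`. -/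
def piecewiseSyndetic (A : Set ℕ) : Prop := ∃ b ≥ 1, bPiecewiseSyndetic b A

/-- `A` is `b`-syndetic: `ℕ = ∪_{t=0}^b (A - t)`. -/
def bSyndetic (b : ℕ) (A : Set ℕ) : Prop := ∀ n : ℕ, ∃ t ≤ b, n + t ∈ A

/-- `A` is syndetic if it is `b`-syndetic for some `b ≥ 1`. -/
def syndetic (A : Set ℕ) : Prop := ∃ b ≥ 1, bSyndetic b A

lemma ps_nonempty {A : Set ℕ} (h : piecewiseSyndetic A) : A.Nonempty := by
  obtain ⟨b, _, hb⟩ := h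
  obtain ⟨z, _, hsub⟩ := hb 1 le_rfl
  have hz : z + 1 ∈ Set.Ioc z (z + 1) := ⟨by omega, le_rfl⟩
  obtain ⟨t, _, ht⟩ := hsub hz
  exact ⟨_, ht⟩

lemma key_transfer {X : Type*} [AddCommGroup X] [Module ℝ X] [UniformSpace X]
    [IsUniformAddGroup X] [ContinuousSMul ℝ X]
    (T : X →L[ℝ] X) (x : X)
    (hx : Dense (Set.range fun n : ℕ => (T ^ n) x))
    {U : Set X} (hU : IsOpen U)
    {y : X} (hy : piecewiseSyndetic {n : ℕ | (T ^ n) y ∈ U}) :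
    piecewiseSyndetic {n : ℕ | (T ^ n) x ∈ U} := by
  classical
  obtain ⟨b, hb1, hb⟩ := hy
  refine ⟨b, hb1, fun i hi => ?_⟩
  obtain ⟨z, hz1, hsub⟩ := hb i hi
  set S : Finset ℕ := (Finset.Ioc z (z + i + b)).filter (fun n => (T ^ n) y ∈ U) with hS
  set V : Set X := ⋂ n ∈ S, (T ^ n) ⁻¹' U with hV
  have hVopen : IsOpen V := isOpen_biInter_finset fun n _ => hU.preimage (T ^ n).continuous
  have hyV : y ∈ V := Set.mem_iInter₂.mpr fun n hn => (Finset.mem_filter.mp hn).2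
  obtain ⟨w, ⟨m, rfl⟩, hwV⟩ := hx.exists_mem_open hVopen ⟨y, hyV⟩
  refine ⟨z + m, by omega, fun k hk => ?_⟩
  obtain ⟨hk1, hk2⟩ := hk
  obtain ⟨j, rfl⟩ : ∃ j, k = m + j := ⟨k - m, by omega⟩
  have hj : j ∈ Set.Ioc z (z + i) := ⟨by omega, by omega⟩
  obtain ⟨t, ht, hjt⟩ := hsub hj
  refine ⟨t, ht, ?_⟩
  have hmem : j + t ∈ S :=
    Finset.mem_filter.mpr ⟨Finset.mem_Ioc.mpr ⟨by omega, by omega⟩, hjt⟩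
  have h1 : (T ^ m) x ∈ (T ^ (j + t)) ⁻¹' U := Set.mem_iInter₂.mp hwV (j + t) hmem
  have h2 : (T ^ (j + t)) ((T ^ m) x) = (T ^ (m + j + t)) x := by
    rw [← ContinuousLinearMap.mul_apply, ← pow_add,
      show j + t + m = m + j + t from by omega]
  show (T ^ (m + j + t)) x ∈ U
  rw [← h2]
  exact h1

lemma ps_dense {X : Type*} [AddCommGroup X] [Module ℝ X] [UniformSpace X]
    [IsUniformAddGroup X] [ContinuousSMul ℝ X]
    (T : X →L[ℝ] X) (x : X)
    (hx : ∀ U : Set X, IsOpen U → U.Nonempty →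
      piecewiseSyndetic {n : ℕ | (T ^ n) x ∈ U}) :
    Dense (Set.range fun n : ℕ => (T ^ n) x) := by
  rw [dense_iff_inter_open]
  intro U hU hUne
  obtain ⟨n, hn⟩ := ps_nonempty (hx U hU hUne)
  exact ⟨(T ^ n) x, hn, n, rfl⟩

/-- `T` is `𝒜_PS`-hypercyclic iff `T` is hypercyclic and for every non-empty
open `U` there is `y` with `N(y,U)` piecewise syndetic; moreover, in that case the
`𝒜_PS`-hypercyclic vectors are exactly the hypercyclic vectors. -/
theorem stmt_7 {X : Type*} [AddCommGroup X] [Module ℝ X] [UniformSpace X] [IsUniformAddGroup X]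
    [ContinuousSMul ℝ X] [CompleteSpace X] [TopologicalSpace.SeparableSpace X]
    [TopologicalSpace.MetrizableSpace X]
    (T : X →L[ℝ] X) :
    ((∃ x : X, ∀ U : Set X, IsOpen U → U.Nonempty →
        piecewiseSyndetic {n : ℕ | (T ^ n) x ∈ U}) ↔
      ((∃ x : X, Dense (Set.range fun n : ℕ => (T ^ n) x)) ∧
        ∀ U : Set X, IsOpen U → U.Nonempty →
          ∃ y : X, piecewiseSyndetic {n : ℕ | (T ^ n) y ∈ U})) ∧
    ((∃ x : X, ∀ U : Set X, IsOpen U → U.Nonempty →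
        piecewiseSyndetic {n : ℕ | (T ^ n) x ∈ U}) →
      {x : X | ∀ U : Set X, IsOpen U → U.Nonempty →
          piecewiseSyndetic {n : ℕ | (T ^ n) x ∈ U}} =
        {x : X | Dense (Set.range fun n : ℕ => (T ^ n) x)}) := by
  constructor
  · constructor
    · rintro ⟨x, hx⟩
      exact ⟨⟨x, ps_dense T x hx⟩, fun U hU hUne => ⟨x, hx U hU hUne⟩⟩
    · rintro ⟨⟨x, hx⟩, h⟩
      refine ⟨x, fun U hU hUne => ?_⟩
      obtain ⟨y, hy⟩ := h U hU hUne
      exact key_transfer T x hx hU hy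
  · rintro ⟨x₀, hx₀⟩
    ext x
    constructor
    · intro hx
      exact ps_dense T x hx
    · intro hx U hU hUne
      exact key_transfer T x hx hU (hx₀ U hU hUne)
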